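/- arXiv:1910.12653 — 4 statements merged into one kernel-verified Lean document; each statement's English description precedes it below -/
import Mathlib

section
/- Let A = U†[a]U be a Hermitian n×n matrix with U unitary and eigenvalues a₁ ≥ … ≥ aₙ, and let a' be obtained from a by replacing all negative entries with 0. Then U†[a']U is a positive semidefinite matrix minimizing the Frobenius distance to A among all Hermitian positive semidefinite matrices: for every positive semidefinite Hermitian X, ‖A − U†[a']U‖_F ≤ ‖A − X‖_F. -/
open Matrix
open scoped ComplexOrder

/-- Squared Frobenius norm of a complex matrix. -/
noncomputable def frobSq {n : ℕ} (A : Matrix (Fin n) (Fin n) ℂ) : ℝ :=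
  ((Aᴴ * A).trace).re

lemma frobSq_eq_sum {n : ℕ} (M : Matrix (Fin n) (Fin n) ℂ) :
    frobSq M = ∑ j, ∑ i, Complex.normSq (M i j) := by
  simp [frobSq, Matrix.trace, Matrix.diag, Matrix.mul_apply, Matrix.conjTranspose_apply,
    Complex.normSq_apply, Complex.mul_re, Complex.re_sum]

lemma frobSq_conj {n : ℕ} (U : Matrix (Fin n) (Fin n) ℂ)
    (hU : U ∈ Matrix.unitaryGroup (Fin n) ℂ) (M : Matrix (Fin n) (Fin n) ℂ) :
    frobSq (Uᴴ * M * U) = frobSq M := by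
  have h1 : U * Uᴴ = 1 := hU.2
  have key : (Uᴴ * M * U)ᴴ * (Uᴴ * M * U) = Uᴴ * (Mᴴ * M) * U := by
    simp only [Matrix.conjTranspose_mul, Matrix.conjTranspose_conjTranspose, Matrix.mul_assoc]
    rw [show U * (Uᴴ * (M * U)) = M * U from by rw [← Matrix.mul_assoc, h1, Matrix.one_mul]]
  rw [frobSq, key, Matrix.trace_mul_comm, ← Matrix.mul_assoc, h1, Matrix.one_mul]
  rfl

lemma diag_nonneg_of_psd {n : ℕ} {Y : Matrix (Fin n) (Fin n) ℂ} (hY : Y.PosSemidef)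
    (j : Fin n) : 0 ≤ Y j j := by
  have := hY.dotProduct_mulVec_nonneg (Pi.single j 1)
  simpa [dotProduct, Matrix.mulVec, Pi.single_apply] using this

/-- optimality of the Cloude eigenvalue-truncation filter: replacing the
negative eigenvalues of a Hermitian matrix `A = Uᴴ[a]U` by `0` yields the PSD matrix
nearest to `A` in Frobenius norm. -/
theorem cloude_filter_optimal {n : ℕ} (U : Matrix (Fin n) (Fin n) ℂ)
    (hU : U ∈ Matrix.unitaryGroup (Fin n) ℂ) (a : Fin n → ℝ) (ha : Antitone a)
    (A : Matrix (Fin n) (Fin n) ℂ)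
    (hA : A = Uᴴ * Matrix.diagonal (fun i => (a i : ℂ)) * U) :
    (Uᴴ * Matrix.diagonal (fun i => ((max (a i) 0 : ℝ) : ℂ)) * U).PosSemidef ∧
    ∀ X : Matrix (Fin n) (Fin n) ℂ, X.PosSemidef →
      frobSq (A - Uᴴ * Matrix.diagonal (fun i => ((max (a i) 0 : ℝ) : ℂ)) * U) ≤ frobSq (A - X) := by
  have h1 : U * Uᴴ = 1 := hU.2
  have h2 : Uᴴ * U = 1 := hU.1
  constructor
  · have hd : (Matrix.diagonal (fun i => ((max (a i) 0 : ℝ) : ℂ))).PosSemidef := by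
      rw [Matrix.posSemidef_diagonal_iff]
      intro i
      rw [Complex.zero_le_real]
      exact le_max_right _ _
    simpa [Matrix.mul_assoc] using hd.conjTranspose_mul_mul_same U
  · intro X hX
    -- rewrite A - B as conjugation of a diagonal matrix
    have hAB : A - Uᴴ * Matrix.diagonal (fun i => ((max (a i) 0 : ℝ) : ℂ)) * U
        = Uᴴ * Matrix.diagonal (fun i => ((min (a i) 0 : ℝ) : ℂ)) * U := by
      have hfun : (fun i => ((a i : ℝ) : ℂ) - ((max (a i) 0 : ℝ) : ℂ))
          = fun i => ((min (a i) 0 : ℝ) : ℂ) := by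
        funext i
        rcases le_total (a i) 0 with h | h
        · simp [max_eq_right h, min_eq_left h]
        · simp [max_eq_left h, min_eq_right h]
      rw [hA, ← Matrix.sub_mul, ← Matrix.mul_sub, Matrix.diagonal_sub, hfun]
    set Y := U * X * Uᴴ with hYdef
    have hY : Y.PosSemidef := by
      rw [hYdef]
      exact hX.mul_mul_conjTranspose_same U
    have hXeq : X = Uᴴ * Y * U := by
      rw [hYdef]
      calc X = (Uᴴ * U) * X * (Uᴴ * U) := by rw [h2, Matrix.one_mul, Matrix.mul_one]
        _ = Uᴴ * (U * X * Uᴴ) * U := by simp only [Matrix.mul_assoc]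
    have hAX : A - X = Uᴴ * (Matrix.diagonal (fun i => (a i : ℂ)) - Y) * U := by
      rw [hA, hXeq, ← Matrix.sub_mul, ← Matrix.mul_sub]
    rw [hAB, hAX, frobSq_conj U hU, frobSq_conj U hU, frobSq_eq_sum, frobSq_eq_sum]
    have step1 : ∀ j : Fin n, Complex.normSq ((a j : ℂ) - Y j j)
        ≤ ∑ i, Complex.normSq ((Matrix.diagonal (fun i => (a i : ℂ)) - Y) i j) := by
      intro j
      have := Finset.single_le_sum
        (f := fun i => Complex.normSq ((Matrix.diagonal (fun i => (a i : ℂ)) - Y) i j))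
        (fun i _ => Complex.normSq_nonneg _) (Finset.mem_univ j)
      simpa [Matrix.diagonal_apply_eq] using this
    have step2 : ∀ j : Fin n, (∑ i, Complex.normSq
        ((Matrix.diagonal (fun i => ((min (a i) 0 : ℝ) : ℂ))) i j))
        ≤ Complex.normSq ((a j : ℂ) - Y j j) := by
      intro j
      have hsum : (∑ i, Complex.normSq
          ((Matrix.diagonal (fun i => ((min (a i) 0 : ℝ) : ℂ))) i j))
          = (min (a j) 0) ^ 2 := by
        rw [Finset.sum_eq_single j]
        · simp [Complex.normSq_apply, sq]
        · intro i _ hij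
          simp [Matrix.diagonal_apply_ne _ hij]
        · simp
      rw [hsum]
      have hYj : 0 ≤ Y j j := diag_nonneg_of_psd hY j
      rw [Complex.le_def] at hYj
      obtain ⟨hre, him⟩ := hYj
      simp only [Complex.zero_re, Complex.zero_im] at hre him
      have hns : Complex.normSq ((a j : ℂ) - Y j j)
          = (a j - (Y j j).re) ^ 2 := by
        simp [Complex.normSq_apply, Complex.sub_re, Complex.sub_im, ← him, sq]
      rw [hns]
      rcases le_total (a j) 0 with h | h
      · rw [min_eq_left h]; nlinarith
      · rw [min_eq_right h]; nlinarith [sq_nonneg (a j - (Y j j).re)]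
    calc (∑ j, ∑ i, Complex.normSq
          ((Matrix.diagonal (fun i => ((min (a i) 0 : ℝ) : ℂ))) i j))
        ≤ ∑ j, Complex.normSq ((a j : ℂ) - Y j j) := Finset.sum_le_sum fun j _ => step2 j
      _ ≤ ∑ j, ∑ i, Complex.normSq ((Matrix.diagonal (fun i => (a i : ℂ)) - Y) i j) :=
          Finset.sum_le_sum fun j _ => step1 j
end

section
/- Let A = U†[a]U be a Hermitian 4×4 matrix with eigenvalues a₁ ≥ a₂ ≥ a₃ ≥ a₄ ≥ 0. Set c = (a₂+a₃+a₄)/3 and b = (a₁, c, c, c). Then U†[b]U minimizes the Frobenius distance to A among all Hermitian matrices of the form V†[d]V with V unitary and d = (d₁, d₂, d₂, d₂), d₁ ≥ d₂ ≥ 0. -/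
open Matrix
open scoped ComplexOrder

namespace DepolAux

lemma frob_expand {n : ℕ} (A B : Matrix (Fin n) (Fin n) ℂ) (hA : Aᴴ = A) (hB : Bᴴ = B) :
    frobSq (A - B) = ((A*A).trace).re - 2*((A*B).trace).re + ((B*B).trace).re := by
  unfold frobSq
  rw [conjTranspose_sub, hA, hB, sub_mul, mul_sub, mul_sub, trace_sub, trace_sub, trace_sub,
    trace_mul_comm B A]
  simp [Complex.sub_re, Complex.add_re]
  ring

lemma herm {n : ℕ} (U : Matrix (Fin n) (Fin n) ℂ) (e : Fin n → ℝ) :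
    (Uᴴ * diagonal (fun i => (e i : ℂ)) * U)ᴴ = Uᴴ * diagonal (fun i => (e i : ℂ)) * U := by
  simp only [conjTranspose_mul, conjTranspose_conjTranspose, diagonal_conjTranspose]
  have h : (star fun i => ((e i : ℂ))) = fun i => ((e i : ℂ)) := by
    funext i; simp
  rw [h, Matrix.mul_assoc]

lemma same_basis_mul {n : ℕ} (U : Matrix (Fin n) (Fin n) ℂ) (h : U * Uᴴ = 1)
    (e f : Fin n → ℂ) :
    (Uᴴ * diagonal e * U) * (Uᴴ * diagonal f * U)
      = Uᴴ * (diagonal e * diagonal f) * U := by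
  have h2 : U * (Uᴴ * (diagonal f * U)) = diagonal f * U := by
    rw [← Matrix.mul_assoc, h, Matrix.one_mul]
  simp only [Matrix.mul_assoc, h2]

lemma trace_conj {n : ℕ} (U : Matrix (Fin n) (Fin n) ℂ) (h : U * Uᴴ = 1)
    (M : Matrix (Fin n) (Fin n) ℂ) :
    (Uᴴ * M * U).trace = M.trace := by
  rw [trace_mul_comm, ← Matrix.mul_assoc, h, Matrix.one_mul]

lemma trace_same {n : ℕ} (U : Matrix (Fin n) (Fin n) ℂ) (h : U * Uᴴ = 1)
    (e f : Fin n → ℝ) :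
    (((Uᴴ * diagonal (fun i => (e i : ℂ)) * U)
        * (Uᴴ * diagonal (fun i => (f i : ℂ)) * U)).trace).re = ∑ i, e i * f i := by
  rw [same_basis_mul U h, trace_conj U h, diagonal_mul_diagonal, trace_diagonal]
  rw [Complex.re_sum]
  apply Finset.sum_congr rfl
  intro i _
  rw [← Complex.ofReal_mul, Complex.ofReal_re]

lemma trace_cross (W : Matrix (Fin 4) (Fin 4) ℂ) (e f : Fin 4 → ℂ) :
    (diagonal e * W * diagonal f * Wᴴ).trace
      = ∑ i, ∑ j, e i * W i j * (f j * star (W i j)) := by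
  have h : diagonal e * W * diagonal f * Wᴴ = (diagonal e * W) * ((diagonal f) * Wᴴ) := by
    rw [Matrix.mul_assoc]
  rw [h, Matrix.trace]
  apply Finset.sum_congr rfl
  intro i _
  rw [Matrix.diag_apply, Matrix.mul_apply]
  apply Finset.sum_congr rfl
  intro j _
  rw [Matrix.diagonal_mul, Matrix.diagonal_mul, Matrix.conjTranspose_apply]

lemma term_re (x y : ℝ) (z : ℂ) :
    ((x:ℂ) * z * ((y:ℂ) * star z)).re = x * y * Complex.normSq z := by
  have h : (x:ℂ) * z * ((y:ℂ) * star z) = ((x*y : ℝ):ℂ) * (z * star z) := by push_cast; ring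
  rw [h, Complex.star_def, Complex.mul_conj, ← Complex.ofReal_mul, Complex.ofReal_re]

end DepolAux

open DepolAux in
/-- best approximation of `A = Uᴴ[a]U` (with `a₁ ≥ a₂ ≥ a₃ ≥ a₄ ≥ 0`)
among coherency matrices `Vᴴ[d₁,d₂,d₂,d₂]V` with `d₁ ≥ d₂ ≥ 0` is obtained with the same
eigenvectors, `b = (a₁, c, c, c)` and `c = (a₂+a₃+a₄)/3`. -/
theorem depolariser_filter_optimal (U : Matrix (Fin 4) (Fin 4) ℂ)
    (hU : U ∈ Matrix.unitaryGroup (Fin 4) ℂ) (a : Fin 4 → ℝ) (ha : Antitone a)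
    (hnn : ∀ i, 0 ≤ a i) (A : Matrix (Fin 4) (Fin 4) ℂ)
    (hA : A = Uᴴ * Matrix.diagonal (fun i => (a i : ℂ)) * U) :
    ∀ (V : Matrix (Fin 4) (Fin 4) ℂ), V ∈ Matrix.unitaryGroup (Fin 4) ℂ →
    ∀ d₁ d₂ : ℝ, d₂ ≤ d₁ → 0 ≤ d₂ →
      frobSq (A - Uᴴ * Matrix.diagonal
          (fun i => (if i = 0 then (a 0 : ℂ) else (((a 1 + a 2 + a 3) / 3 : ℝ) : ℂ))) * U)
        ≤ frobSq (A - Vᴴ * Matrix.diagonal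
          (fun i => (if i = 0 then (d₁ : ℂ) else (d₂ : ℂ))) * V) := by
  intro V hV d₁ d₂ hd21 hd2
  set c : ℝ := (a 1 + a 2 + a 3) / 3 with hc
  set b : Fin 4 → ℝ := fun i => if i = 0 then a 0 else c with hb
  set dd : Fin 4 → ℝ := fun i => if i = 0 then d₁ else d₂ with hdd
  -- rewrite diagonal arguments as coercions of real functions
  have hbd : (fun i : Fin 4 => (if i = 0 then (a 0 : ℂ) else ((c : ℝ) : ℂ)))
      = fun i => ((b i : ℝ) : ℂ) := by
    funext i
    by_cases h : i = 0 <;> simp [hb, h]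
  have hdd' : (fun i : Fin 4 => (if i = 0 then (d₁ : ℂ) else (d₂ : ℂ)))
      = fun i => ((dd i : ℝ) : ℂ) := by
    funext i
    by_cases h : i = 0 <;> simp [hdd, h]
  rw [hbd, hdd', hA]
  -- unitarity facts
  have hUU : U * Uᴴ = 1 := by
    simpa [Matrix.star_eq_conjTranspose] using (Matrix.mem_unitaryGroup_iff).mp hU
  set W : Matrix (Fin 4) (Fin 4) ℂ := U * Vᴴ with hWdef
  have hWmem : W ∈ Matrix.unitaryGroup (Fin 4) ℂ := by
    exact mul_mem hU (Unitary.star_mem hV)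
  have hWW : W * Wᴴ = 1 := by
    simpa [Matrix.star_eq_conjTranspose] using (Matrix.mem_unitaryGroup_iff).mp hWmem
  have hWW' : Wᴴ * W = 1 := by
    simpa [Matrix.star_eq_conjTranspose] using (Matrix.mem_unitaryGroup_iff').mp hWmem
  -- expand both Frobenius norms
  rw [frob_expand _ _ (herm U a) (herm U b), frob_expand _ _ (herm U a) (herm V dd),
    trace_same U hUU a a, trace_same U hUU a b, trace_same U hUU b b]
  have hBB : (((Vᴴ * diagonal (fun i => ((dd i : ℝ) : ℂ)) * V)
      * (Vᴴ * diagonal (fun i => ((dd i : ℝ) : ℂ)) * V)).trace).re = ∑ i, dd i * dd i := by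
    have hVV : V * Vᴴ = 1 := by
      simpa [Matrix.star_eq_conjTranspose] using (Matrix.mem_unitaryGroup_iff).mp hV
    exact trace_same V hVV dd dd
  rw [hBB]
  -- the cross trace
  have hcross : ((Uᴴ * diagonal (fun i => ((a i : ℝ) : ℂ)) * U)
      * (Vᴴ * diagonal (fun i => ((dd i : ℝ) : ℂ)) * V))
      = Uᴴ * ((diagonal (fun i => ((a i : ℝ) : ℂ)) * W
          * diagonal (fun i => ((dd i : ℝ) : ℂ)) * Wᴴ) * U) := by
    have hUU2 : Uᴴ * U = 1 := by
      simpa [Matrix.star_eq_conjTranspose] using (Matrix.mem_unitaryGroup_iff').mp hU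
    simp only [hWdef, conjTranspose_mul, conjTranspose_conjTranspose, Matrix.mul_assoc,
      hUU2, Matrix.mul_one]
  have hTval : (((Uᴴ * diagonal (fun i => ((a i : ℝ) : ℂ)) * U)
      * (Vᴴ * diagonal (fun i => ((dd i : ℝ) : ℂ)) * V)).trace).re
      = ∑ i, ∑ j, a i * dd j * Complex.normSq (W i j) := by
    rw [hcross, ← Matrix.mul_assoc, trace_conj U hUU, trace_cross]
    rw [Complex.re_sum]
    apply Finset.sum_congr rfl
    intro i _
    rw [Complex.re_sum]
    apply Finset.sum_congr rfl
    intro j _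
    exact term_re _ _ _
  rw [hTval]
  -- row and column sums of |W i j|^2
  have hrow : ∀ i : Fin 4, Complex.normSq (W i 0) + Complex.normSq (W i 1)
      + Complex.normSq (W i 2) + Complex.normSq (W i 3) = 1 := by
    intro i
    have h1 : (W * Wᴴ) i i = 1 := by rw [hWW]; simp
    rw [Matrix.mul_apply] at h1
    have h2 := congrArg Complex.re h1
    simp only [Matrix.conjTranspose_apply, Complex.star_def, Complex.mul_conj,
      Complex.re_sum, Complex.ofReal_re, Complex.one_re] at h2
    rw [Fin.sum_univ_four] at h2
    linarith
  have hcol : Complex.normSq (W 0 0) + Complex.normSq (W 1 0)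
      + Complex.normSq (W 2 0) + Complex.normSq (W 3 0) = 1 := by
    have h1 : (Wᴴ * W) 0 0 = 1 := by rw [hWW']; simp
    rw [Matrix.mul_apply] at h1
    have h2 := congrArg Complex.re h1
    simp only [Matrix.conjTranspose_apply, Complex.star_def,
      ← Complex.normSq_eq_conj_mul_self,
      Complex.re_sum, Complex.ofReal_re, Complex.one_re] at h2
    rw [Fin.sum_univ_four] at h2
    linarith
  -- bound the cross term
  have ha01 : a 1 ≤ a 0 := ha (by decide : (0:Fin 4) ≤ 1)
  have ha02 : a 2 ≤ a 0 := ha (by decide : (0:Fin 4) ≤ 2)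
  have ha03 : a 3 ≤ a 0 := ha (by decide : (0:Fin 4) ≤ 3)
  have hSle : (∑ i, ∑ j, a i * dd j * Complex.normSq (W i j))
      ≤ a 0 * d₁ + (a 1 + a 2 + a 3) * d₂ := by
    have k1 : 0 ≤ (d₁ - d₂) * ((a 0 - a 1) * Complex.normSq (W 1 0)) :=
      mul_nonneg (by linarith) (mul_nonneg (by linarith) (Complex.normSq_nonneg _))
    have k2 : 0 ≤ (d₁ - d₂) * ((a 0 - a 2) * Complex.normSq (W 2 0)) :=
      mul_nonneg (by linarith) (mul_nonneg (by linarith) (Complex.normSq_nonneg _))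
    have k3 : 0 ≤ (d₁ - d₂) * ((a 0 - a 3) * Complex.normSq (W 3 0)) :=
      mul_nonneg (by linarith) (mul_nonneg (by linarith) (Complex.normSq_nonneg _))
    have r0 := congrArg (fun t => a 0 * d₂ * t) (hrow 0)
    have r1 := congrArg (fun t => a 1 * d₂ * t) (hrow 1)
    have r2 := congrArg (fun t => a 2 * d₂ * t) (hrow 2)
    have r3 := congrArg (fun t => a 3 * d₂ * t) (hrow 3)
    have rc := congrArg (fun t => (d₁ - d₂) * a 0 * t) hcol
    beta_reduce at r0 r1 r2 r3 rc
    simp only [Fin.sum_univ_four, hdd, (by decide : (1:Fin 4) ≠ 0),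
      (by decide : (2:Fin 4) ≠ 0), (by decide : (3:Fin 4) ≠ 0),
      if_true, if_false, ite_true, ite_false, if_pos rfl, if_neg]
    linarith [r0, r1, r2, r3, rc, k1, k2, k3]
  -- final real inequality
  simp only [Fin.sum_univ_four, hb, hdd, hc, (by decide : (1:Fin 4) ≠ 0),
    (by decide : (2:Fin 4) ≠ 0), (by decide : (3:Fin 4) ≠ 0),
    if_true, if_false, ite_true, ite_false, if_pos rfl, if_neg] at hSle ⊢
  nlinarith [hSle, sq_nonneg (a 0 - d₁), sq_nonneg (3*d₂ - (a 1 + a 2 + a 3))]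
end

section
/- For any Hermitian n×n matrices A and X with eigenvalue vectors a = (a₁ ≥ … ≥ aₙ) and x = (x₁ ≥ … ≥ xₙ), the inequality ‖[a] − [x]‖_F ≤ ‖A − X‖_F holds, where [a], [x] are the corresponding diagonal matrices. -/
open Matrix
open scoped ComplexOrder

lemma ds_bilinear_le {n : ℕ} (a x : Fin n → ℝ) (ha : Antitone a) (hx : Antitone x)
    (S : Matrix (Fin n) (Fin n) ℝ) (hS : S ∈ doublyStochastic ℝ (Fin n)) :
    ∑ i, ∑ j, a i * x j * S i j ≤ ∑ i, a i * x i := by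
  obtain ⟨w, hw0, hw1, hwS⟩ := exists_eq_sum_perm_of_mem_doublyStochastic hS
  have hmono : Monovary a x := by
    intro i j hij
    rcases le_total j i with h | h
    · exact ha h
    · exact absurd (hx h) (not_le.mpr hij)
  have hSentry : ∀ i j, S i j = ∑ σ : Equiv.Perm (Fin n),
      w σ * (if σ i = j then 1 else 0) := by
    intro i j
    rw [← hwS]
    simp [Matrix.sum_apply, Equiv.Perm.permMatrix, PEquiv.toMatrix_apply,
      Equiv.toPEquiv_apply]
  have hrow : ∀ i, ∑ j, a i * x j * S i j
      = ∑ σ : Equiv.Perm (Fin n), w σ * (a i * x (σ i)) := by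
    intro i
    simp only [hSentry, Finset.mul_sum]
    rw [Finset.sum_comm]
    refine Finset.sum_congr rfl fun σ _ => ?_
    simp [mul_ite, Finset.sum_ite_eq]
    ring
  calc ∑ i, ∑ j, a i * x j * S i j
      = ∑ σ : Equiv.Perm (Fin n), w σ * ∑ i, a i * x (σ i) := by
        simp only [hrow]
        rw [Finset.sum_comm]
        simp [Finset.mul_sum]
    _ ≤ ∑ σ : Equiv.Perm (Fin n), w σ * ∑ i, a i * x i := by
        refine Finset.sum_le_sum fun σ _ => ?_
        exact mul_le_mul_of_nonneg_left (hmono.sum_mul_comp_perm_le_sum_mul) (hw0 σ)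
    _ = ∑ i, a i * x i := by rw [← Finset.sum_mul, hw1, one_mul]

lemma trace_conj' {n : ℕ} (Q M : Matrix (Fin n) (Fin n) ℂ) (h : Q * Qᴴ = 1) :
    (Qᴴ * M * Q).trace = M.trace := by
  rw [mul_assoc, Matrix.trace_mul_comm, mul_assoc, h, mul_one]

lemma trace_diag_conj {n : ℕ} (W : Matrix (Fin n) (Fin n) ℂ) (d e : Fin n → ℂ) :
    (Matrix.diagonal d * W * Matrix.diagonal e * Wᴴ).trace
      = ∑ i, ∑ j, d i * e j * (W i j * star (W i j)) := by
  rw [Matrix.trace]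
  refine Finset.sum_congr rfl fun i _ => ?_
  rw [Matrix.diag_apply, Matrix.mul_apply]
  refine Finset.sum_congr rfl fun j _ => ?_
  rw [Matrix.mul_diagonal, Matrix.diagonal_mul, Matrix.conjTranspose_apply]
  ring

/-- Mirsky/Hoffman–Wielandt-type inequality for Hermitian matrices:
if `A = Uᴴ[a]U` and `X = Vᴴ[x]V` with decreasing eigenvalue vectors `a`, `x`, then
`‖[a] − [x]‖_F ≤ ‖A − X‖_F`. -/
theorem diag_eigenvalue_frobenius_le {n : ℕ}
    (U V : Matrix (Fin n) (Fin n) ℂ)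
    (hU : U ∈ Matrix.unitaryGroup (Fin n) ℂ) (hV : V ∈ Matrix.unitaryGroup (Fin n) ℂ)
    (a x : Fin n → ℝ) (ha : Antitone a) (hx : Antitone x)
    (A X : Matrix (Fin n) (Fin n) ℂ)
    (hA : A = Uᴴ * Matrix.diagonal (fun i => (a i : ℂ)) * U)
    (hX : X = Vᴴ * Matrix.diagonal (fun i => (x i : ℂ)) * V) :
    frobSq (Matrix.diagonal (fun i => (a i : ℂ)) - Matrix.diagonal (fun i => (x i : ℂ)))
      ≤ frobSq (A - X) := by
  set D := Matrix.diagonal (fun i => (a i : ℂ)) with hD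
  set E := Matrix.diagonal (fun i => (x i : ℂ)) with hE
  set W := U * Vᴴ with hWdef
  -- unitarity facts
  have hU2 : U * Uᴴ = 1 := by
    simpa [Matrix.star_eq_conjTranspose] using Matrix.mem_unitaryGroup_iff.mp hU
  have hU1 : Uᴴ * U = 1 := by
    simpa [Matrix.star_eq_conjTranspose] using Matrix.mem_unitaryGroup_iff'.mp hU
  have hV2 : V * Vᴴ = 1 := by
    simpa [Matrix.star_eq_conjTranspose] using Matrix.mem_unitaryGroup_iff.mp hV
  have hV1 : Vᴴ * V = 1 := by
    simpa [Matrix.star_eq_conjTranspose] using Matrix.mem_unitaryGroup_iff'.mp hV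
  have hWH : Wᴴ = V * Uᴴ := by
    rw [hWdef, Matrix.conjTranspose_mul, Matrix.conjTranspose_conjTranspose]
  have hW2 : W * Wᴴ = 1 := by
    rw [hWH, hWdef, show U * Vᴴ * (V * Uᴴ) = U * (Vᴴ * V) * Uᴴ by
      simp only [Matrix.mul_assoc], hV1, Matrix.mul_one, hU2]
  have hW1 : Wᴴ * W = 1 := by
    rw [hWH, hWdef, show V * Uᴴ * (U * Vᴴ) = V * (Uᴴ * U) * Vᴴ by
      simp only [Matrix.mul_assoc], hU1, Matrix.mul_one, hV2]
  -- Hermitian facts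
  have hDh : Dᴴ = D := by
    rw [hD, Matrix.diagonal_conjTranspose]
    congr 1
    funext i
    simp [Pi.star_def, Complex.conj_ofReal]
  have hEh : Eᴴ = E := by
    rw [hE, Matrix.diagonal_conjTranspose]
    congr 1
    funext i
    simp [Pi.star_def, Complex.conj_ofReal]
  have hAh : Aᴴ = A := by
    rw [hA, Matrix.conjTranspose_mul, Matrix.conjTranspose_mul,
      Matrix.conjTranspose_conjTranspose, hDh, Matrix.mul_assoc]
  have hXh : Xᴴ = X := by
    rw [hX, Matrix.conjTranspose_mul, Matrix.conjTranspose_mul,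
      Matrix.conjTranspose_conjTranspose, hEh, Matrix.mul_assoc]
  -- trace computations
  have tAA : (A * A).trace = ∑ i, (a i : ℂ) ^ 2 := by
    have h1 : A * A = Uᴴ * (D * D) * U := by
      rw [hA, show Uᴴ * D * U * (Uᴴ * D * U) = Uᴴ * (D * ((U * Uᴴ) * (D * U))) by
        simp only [Matrix.mul_assoc], hU2, Matrix.one_mul]
      simp only [Matrix.mul_assoc]
    rw [h1, trace_conj' U (D * D) hU2, hD, Matrix.diagonal_mul_diagonal,
      Matrix.trace_diagonal]
    exact Finset.sum_congr rfl fun i _ => (sq _).symm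
  have tXX : (X * X).trace = ∑ i, (x i : ℂ) ^ 2 := by
    have h1 : X * X = Vᴴ * (E * E) * V := by
      rw [hX, show Vᴴ * E * V * (Vᴴ * E * V) = Vᴴ * (E * ((V * Vᴴ) * (E * V))) by
        simp only [Matrix.mul_assoc], hV2, Matrix.one_mul]
      simp only [Matrix.mul_assoc]
    rw [h1, trace_conj' V (E * E) hV2, hE, Matrix.diagonal_mul_diagonal,
      Matrix.trace_diagonal]
    exact Finset.sum_congr rfl fun i _ => (sq _).symm
  have tAX : (A * X).trace = ∑ i, ∑ j, (a i : ℂ) * (x j : ℂ) * (W i j * star (W i j)) := by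
    calc (A * X).trace
        = (Uᴴ * (D * (U * (Vᴴ * (E * V))))).trace := by
          rw [hA, hX]; simp only [Matrix.mul_assoc]
      _ = ((D * (U * (Vᴴ * (E * V)))) * Uᴴ).trace := Matrix.trace_mul_comm _ _
      _ = (D * W * E * Wᴴ).trace := by
          rw [hWH, hWdef]; simp only [Matrix.mul_assoc]
      _ = ∑ i, ∑ j, (a i : ℂ) * (x j : ℂ) * (W i j * star (W i j)) := by
          rw [hD, hE, trace_diag_conj]
  have tXA : (X * A).trace = (A * X).trace := Matrix.trace_mul_comm _ _
  -- the doubly stochastic matrix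
  set S : Matrix (Fin n) (Fin n) ℝ := Matrix.of (fun i j => Complex.normSq (W i j)) with hS
  have hSmem : S ∈ doublyStochastic ℝ (Fin n) := by
    rw [mem_doublyStochastic_iff_sum]
    refine ⟨fun i j => Complex.normSq_nonneg _, fun i => ?_, fun j => ?_⟩
    · have h1 : (W * Wᴴ) i i = (1 : Matrix (Fin n) (Fin n) ℂ) i i := by rw [hW2]
      rw [Matrix.mul_apply, Matrix.one_apply_eq] at h1
      have h2 : ∑ j, (Complex.normSq (W i j) : ℂ) = 1 := by
        rw [← h1]
        refine Finset.sum_congr rfl fun j _ => ?_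
        rw [Matrix.conjTranspose_apply, ← Complex.mul_conj]
        rfl
      have := congrArg Complex.re h2
      simpa [Complex.re_sum, hS] using this
    · have h1 : (Wᴴ * W) j j = (1 : Matrix (Fin n) (Fin n) ℂ) j j := by rw [hW1]
      rw [Matrix.mul_apply, Matrix.one_apply_eq] at h1
      have h2 : ∑ i, (Complex.normSq (W i j) : ℂ) = 1 := by
        rw [← h1]
        refine Finset.sum_congr rfl fun i _ => ?_
        rw [Matrix.conjTranspose_apply, mul_comm, ← Complex.mul_conj]
        rfl
      have := congrArg Complex.re h2
      simpa [Complex.re_sum, hS] using this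
  -- real-part computations
  have hRe : frobSq (A - X)
      = (∑ i, (a i) ^ 2) + (∑ i, (x i) ^ 2) - 2 * ∑ i, ∑ j, a i * x j * S i j := by
    have hsub : (A - X)ᴴ = A - X := by rw [Matrix.conjTranspose_sub, hAh, hXh]
    have hexp : ((A - X)ᴴ * (A - X)).trace
        = (A * A).trace - (A * X).trace - (X * A).trace + (X * X).trace := by
      rw [hsub, Matrix.sub_mul, Matrix.mul_sub, Matrix.mul_sub, Matrix.trace_sub,
        Matrix.trace_sub, Matrix.trace_sub]
      ring
    rw [frobSq, hexp, tAA, tXX, tAX, tXA, tAX]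
    have hre1 : (∑ i, (a i : ℂ) ^ 2).re = ∑ i, (a i) ^ 2 := by
      rw [Complex.re_sum]
      refine Finset.sum_congr rfl fun i _ => ?_
      rw [← Complex.ofReal_pow, Complex.ofReal_re]
    have hre2 : (∑ i, (x i : ℂ) ^ 2).re = ∑ i, (x i) ^ 2 := by
      rw [Complex.re_sum]
      refine Finset.sum_congr rfl fun i _ => ?_
      rw [← Complex.ofReal_pow, Complex.ofReal_re]
    have hre3 : (∑ i, ∑ j, (a i : ℂ) * (x j : ℂ) * (W i j * star (W i j))).re
        = ∑ i, ∑ j, a i * x j * S i j := by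
      rw [Complex.re_sum]
      refine Finset.sum_congr rfl fun i _ => ?_
      rw [Complex.re_sum]
      refine Finset.sum_congr rfl fun j _ => ?_
      have : (W i j * star (W i j)) = ((Complex.normSq (W i j) : ℝ) : ℂ) :=
        Complex.mul_conj _
      rw [this, ← Complex.ofReal_mul, ← Complex.ofReal_mul, Complex.ofReal_re]
      rfl
    simp only [Complex.sub_re, Complex.add_re, hre1, hre2, hre3]
    ring
  have hReD : frobSq (D - E) = ∑ i, (a i - x i) ^ 2 := by
    have h1 : D - E = Matrix.diagonal (fun i => (a i : ℂ) - (x i : ℂ)) := by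
      rw [hD, hE, Matrix.diagonal_sub]
    have h2 : (D - E)ᴴ = D - E := by rw [Matrix.conjTranspose_sub, hDh, hEh]
    rw [frobSq, h2, h1, Matrix.diagonal_mul_diagonal, Matrix.trace_diagonal,
      Complex.re_sum]
    refine Finset.sum_congr rfl fun i _ => ?_
    rw [show ((a i : ℂ) - (x i : ℂ)) * ((a i : ℂ) - (x i : ℂ))
        = (((a i - x i) ^ 2 : ℝ) : ℂ) by push_cast; ring, Complex.ofReal_re]
  have hkey : ∑ i, ∑ j, a i * x j * S i j ≤ ∑ i, a i * x i :=
    ds_bilinear_le a x ha hx S hSmem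
  have hdexp : ∑ i, (a i - x i) ^ 2
      = (∑ i, (a i) ^ 2) + (∑ i, (x i) ^ 2) - 2 * ∑ i, a i * x i := by
    have h := Finset.sum_congr rfl
      (fun i (_ : i ∈ Finset.univ) =>
        (by ring : (a i - x i) ^ 2 = (a i ^ 2 + x i ^ 2) - 2 * (a i * x i)))
    rw [h, Finset.sum_sub_distrib, Finset.sum_add_distrib, ← Finset.mul_sum]
  rw [hRe, hReD, hdexp]
  linarith
end

section
/- (Weyl's inequality, simplified) Let A, B, C be Hermitian n×n matrices with A + B = C, and let a₁ ≥ … ≥ aₙ, b₁ ≥ … ≥ bₙ, c₁ ≥ … ≥ cₙ be their eigenvalues. Then aᵢ + bₙ ≤ cᵢ ≤ aᵢ + b₁ for all 1 ≤ i ≤ n. -/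
open Matrix
open scoped ComplexOrder

section WeylAux

variable {n : ℕ}

/-- A nonzero vector satisfying `i` conditions from `M` and `n - i` conditions from `N`. -/
lemma weyl_exists_vec (M N : Matrix (Fin (n + 1)) (Fin (n + 1)) ℂ) (i : Fin (n + 1)) :
    ∃ x : Fin (n + 1) → ℂ, x ≠ 0 ∧ (∀ j, j < i → (M *ᵥ x) j = 0) ∧
      (∀ j, i < j → (N *ᵥ x) j = 0) := by
  let L : (Fin (n + 1) → ℂ) →ₗ[ℂ] (Fin n → ℂ) :=
    { toFun := fun x k =>
        if (k : ℕ) < (i : ℕ) then (M *ᵥ x) k.castSucc else (N *ᵥ x) k.succ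
      map_add' := by
        intro x y; funext k
        by_cases h : (k : ℕ) < (i : ℕ) <;> simp [h, Matrix.mulVec_add]
      map_smul' := by
        intro r x; funext k
        by_cases h : (k : ℕ) < (i : ℕ) <;> simp [h, Matrix.mulVec_smul] }
  have hker : LinearMap.ker L ≠ ⊥ := by
    intro hbot
    have h1 := LinearMap.finrank_range_add_finrank_ker L
    rw [hbot, finrank_bot] at h1
    have h2 : Module.finrank ℂ ↥(LinearMap.range L) ≤ Module.finrank ℂ (Fin n → ℂ) :=
      (LinearMap.range L).finrank_le
    simp [Module.finrank_pi] at h1 h2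
    omega
  obtain ⟨x, hx, hx0⟩ := (Submodule.ne_bot_iff _).mp hker
  refine ⟨x, hx0, ?_, ?_⟩
  · intro j hj
    have hj' : (j : ℕ) < n := lt_of_lt_of_le hj (Nat.lt_succ_iff.mp i.isLt)
    have := congrFun (LinearMap.mem_ker.mp hx) ⟨(j : ℕ), hj'⟩
    simpa [L, Fin.lt_def.mp hj, Fin.castSucc, Fin.castAdd, Fin.castLE] using this
  · intro j hj
    have hj1 : 1 ≤ (j : ℕ) := by
      have := Fin.lt_def.mp hj; omega
    have hj' : (j : ℕ) - 1 < n := by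
      have := j.isLt; omega
    have := congrFun (LinearMap.mem_ker.mp hx) ⟨(j : ℕ) - 1, hj'⟩
    have hnotlt : ¬ ((j : ℕ) - 1 < (i : ℕ)) := by
      have := Fin.lt_def.mp hj; omega
    have hsucc : (⟨(j : ℕ) - 1, hj'⟩ : Fin n).succ = j := by
      ext; simp; omega
    simpa [L, hnotlt, hsucc] using this
  
/-- Quadratic form of a conjugated diagonal matrix. -/
lemma weyl_quad {m : ℕ} (U : Matrix (Fin m) (Fin m) ℂ) (d : Fin m → ℝ) (x : Fin m → ℂ) :
    star x ⬝ᵥ ((Uᴴ * Matrix.diagonal (fun i => (d i : ℂ)) * U) *ᵥ x)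
      = ↑(∑ j, d j * Complex.normSq ((U *ᵥ x) j)) := by
  rw [Matrix.mul_assoc]
  rw [← Matrix.mulVec_mulVec, Matrix.dotProduct_mulVec, ← Matrix.star_mulVec,
    ← Matrix.mulVec_mulVec]
  simp only [dotProduct, Matrix.mulVec_diagonal, Pi.star_apply, Complex.ofReal_sum]
  refine Finset.sum_congr rfl fun j _ => ?_
  rw [Complex.ofReal_mul, Complex.normSq_eq_conj_mul_self]
  ring_nf
  simp [Complex.star_def]
  ring

lemma weyl_dot_self {m : ℕ} (x : Fin m → ℂ) :
    star x ⬝ᵥ x = ↑(∑ j, Complex.normSq (x j)) := by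
  simp only [dotProduct, Pi.star_apply, Complex.ofReal_sum]
  refine Finset.sum_congr rfl fun j _ => ?_
  rw [Complex.normSq_eq_conj_mul_self]
  simp [Complex.star_def]

/-- Unitary matrices preserve the sum of squared norms. -/
lemma weyl_normpres {m : ℕ} (U : Matrix (Fin m) (Fin m) ℂ)
    (hU : U ∈ Matrix.unitaryGroup (Fin m) ℂ) (x : Fin m → ℂ) :
    ∑ j, Complex.normSq ((U *ᵥ x) j) = ∑ j, Complex.normSq (x j) := by
  have h1 : Uᴴ * U = 1 := by
    have := hU.1
    rwa [Matrix.star_eq_conjTranspose] at this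
  have h2 := weyl_quad U (fun _ => (1 : ℝ)) x
  simp only [Complex.ofReal_one, Matrix.diagonal_one, mul_one, one_mul] at h2
  rw [h1, Matrix.one_mulVec, weyl_dot_self] at h2
  exact_mod_cast h2.symm

lemma weyl_sum_le (d : Fin (n + 1) → ℝ) (hd : Antitone d) (i : Fin (n + 1))
    (y : Fin (n + 1) → ℂ) (hy : ∀ j, j < i → y j = 0) :
    ∑ j, d j * Complex.normSq (y j) ≤ d i * ∑ j, Complex.normSq (y j) := by
  rw [Finset.mul_sum]
  refine Finset.sum_le_sum fun j _ => ?_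
  by_cases h : j < i
  · simp [hy j h]
  · exact mul_le_mul_of_nonneg_right (hd (not_lt.mp h)) (Complex.normSq_nonneg _)

lemma weyl_sum_ge (d : Fin (n + 1) → ℝ) (hd : Antitone d) (i : Fin (n + 1))
    (y : Fin (n + 1) → ℂ) (hy : ∀ j, i < j → y j = 0) :
    d i * ∑ j, Complex.normSq (y j) ≤ ∑ j, d j * Complex.normSq (y j) := by
  rw [Finset.mul_sum]
  refine Finset.sum_le_sum fun j _ => ?_
  by_cases h : i < j
  · simp [hy j h]
  · exact mul_le_mul_of_nonneg_right (hd (not_lt.mp h)) (Complex.normSq_nonneg _)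

end WeylAux

/-- Weyl's inequality, simplified: if `A + B = C` are Hermitian with
decreasing eigenvalue vectors `a`, `b`, `c`, then `aᵢ + bₙ ≤ cᵢ ≤ aᵢ + b₁` for all `i`. -/
theorem weyl_inequality_simplified {n : ℕ}
    (U V W : Matrix (Fin (n + 1)) (Fin (n + 1)) ℂ)
    (hU : U ∈ Matrix.unitaryGroup (Fin (n + 1)) ℂ)
    (hV : V ∈ Matrix.unitaryGroup (Fin (n + 1)) ℂ)
    (hW : W ∈ Matrix.unitaryGroup (Fin (n + 1)) ℂ)
    (a b c : Fin (n + 1) → ℝ) (ha : Antitone a) (hb : Antitone b) (hc : Antitone c)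
    (A B C : Matrix (Fin (n + 1)) (Fin (n + 1)) ℂ)
    (hA : A = Uᴴ * Matrix.diagonal (fun i => (a i : ℂ)) * U)
    (hB : B = Vᴴ * Matrix.diagonal (fun i => (b i : ℂ)) * V)
    (hC : C = Wᴴ * Matrix.diagonal (fun i => (c i : ℂ)) * W)
    (hsum : A + B = C) :
    ∀ i, a i + b (Fin.last n) ≤ c i ∧ c i ≤ a i + b 0 := by
  intro i
  -- the key identity for any vector x
  have key : ∀ x : Fin (n + 1) → ℂ,
      (∑ j, a j * Complex.normSq ((U *ᵥ x) j)) + (∑ j, b j * Complex.normSq ((V *ᵥ x) j))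
        = ∑ j, c j * Complex.normSq ((W *ᵥ x) j) := by
    intro x
    have h0 : star x ⬝ᵥ (A *ᵥ x) + star x ⬝ᵥ (B *ᵥ x) = star x ⬝ᵥ (C *ᵥ x) := by
      rw [← hsum, Matrix.add_mulVec, dotProduct_add]
    rw [hA, hB, hC, weyl_quad, weyl_quad, weyl_quad] at h0
    exact_mod_cast h0
  constructor
  · -- lower bound: a i + b (last) ≤ c i
    obtain ⟨x, hx0, hWz, hUz⟩ := weyl_exists_vec W U i
    have hN : 0 < ∑ j, Complex.normSq (x j) := by
      obtain ⟨j, hj⟩ := Function.ne_iff.mp hx0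
      exact Finset.sum_pos' (fun k _ => Complex.normSq_nonneg _)
        ⟨j, Finset.mem_univ j, Complex.normSq_pos.mpr hj⟩
    set N := ∑ j, Complex.normSq (x j) with hNdef
    have hUx := weyl_normpres U hU x
    have hVx := weyl_normpres V hV x
    have hWx := weyl_normpres W hW x
    have hAge : a i * N ≤ ∑ j, a j * Complex.normSq ((U *ᵥ x) j) := by
      have := weyl_sum_ge a ha i (U *ᵥ x) hUz
      rwa [hUx] at this
    have hBge : b (Fin.last n) * N ≤ ∑ j, b j * Complex.normSq ((V *ᵥ x) j) := by
      have := weyl_sum_ge b hb (Fin.last n) (V *ᵥ x)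
        (fun j hj => absurd (Fin.le_last j) (not_le.mpr hj))
      rwa [hVx] at this
    have hCle : ∑ j, c j * Complex.normSq ((W *ᵥ x) j) ≤ c i * N := by
      have := weyl_sum_le c hc i (W *ᵥ x) hWz
      rwa [hWx] at this
    have : (a i + b (Fin.last n)) * N ≤ c i * N := by
      calc (a i + b (Fin.last n)) * N = a i * N + b (Fin.last n) * N := by ring
        _ ≤ (∑ j, a j * Complex.normSq ((U *ᵥ x) j))
              + (∑ j, b j * Complex.normSq ((V *ᵥ x) j)) := add_le_add hAge hBge
        _ = ∑ j, c j * Complex.normSq ((W *ᵥ x) j) := key x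
        _ ≤ c i * N := hCle
    exact le_of_mul_le_mul_right this hN
  · -- upper bound: c i ≤ a i + b 0
    obtain ⟨x, hx0, hUz, hWz⟩ := weyl_exists_vec U W i
    have hN : 0 < ∑ j, Complex.normSq (x j) := by
      obtain ⟨j, hj⟩ := Function.ne_iff.mp hx0
      exact Finset.sum_pos' (fun k _ => Complex.normSq_nonneg _)
        ⟨j, Finset.mem_univ j, Complex.normSq_pos.mpr hj⟩
    set N := ∑ j, Complex.normSq (x j) with hNdef
    have hUx := weyl_normpres U hU x
    have hVx := weyl_normpres V hV x
    have hWx := weyl_normpres W hW x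
    have hAle : ∑ j, a j * Complex.normSq ((U *ᵥ x) j) ≤ a i * N := by
      have := weyl_sum_le a ha i (U *ᵥ x) hUz
      rwa [hUx] at this
    have hBle : ∑ j, b j * Complex.normSq ((V *ᵥ x) j) ≤ b 0 * N := by
      have := weyl_sum_le b hb 0 (V *ᵥ x) (fun j hj => absurd (Fin.zero_le j) (not_le.mpr hj))
      rwa [hVx] at this
    have hCge : c i * N ≤ ∑ j, c j * Complex.normSq ((W *ᵥ x) j) := by
      have := weyl_sum_ge c hc i (W *ᵥ x) hWz
      rwa [hWx] at this
    have : c i * N ≤ (a i + b 0) * N := by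
      calc c i * N ≤ ∑ j, c j * Complex.normSq ((W *ᵥ x) j) := hCge
        _ = (∑ j, a j * Complex.normSq ((U *ᵥ x) j))
              + (∑ j, b j * Complex.normSq ((V *ᵥ x) j)) := (key x).symm
        _ ≤ a i * N + b 0 * N := add_le_add hAle hBle
        _ = (a i + b 0) * N := by ring
    exact le_of_mul_le_mul_right this hN
end
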